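/- Let F(u,T) ∈ F_q[u,T] have degree k ≥ 1 in T with distinct roots α₁,…,α_k in an algebraic closure of F_q(u) (separability), and set F_v = ∂F/∂u + v·∂F/∂T ∈ F_q[u,T,v]. Then the discriminant in v of the resultant R(F, F_v) (taken in T) is a nonzero polynomial in F_q[u] if and only if the values (∂F/∂u)/(∂F/∂T)(u, α_i) for 1 ≤ i ≤ k are pairwise distinct. -/

import Mathlib

/-- The Sylvester matrix of `f` and `g` with respect to formal degrees `m` and `n`. -/
noncomputable def sylvester {R : Type*} [CommRing R] (m n : ℕ) (f g : Polynomial R) :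
    Matrix (Fin (m + n)) (Fin (m + n)) R :=
  Matrix.of fun i j =>
    if (i : ℕ) < n then
      if (i : ℕ) ≤ (j : ℕ) ∧ (j : ℕ) ≤ m + (i : ℕ) then f.coeff (m + (i : ℕ) - (j : ℕ))
      else 0
    else
      if (i : ℕ) - n ≤ (j : ℕ) ∧ (j : ℕ) ≤ n + ((i : ℕ) - n) then
        g.coeff (n + ((i : ℕ) - n) - (j : ℕ))
      else 0

/-- The resultant `R_{m,n}(f,g)` (Sylvester determinant). -/
noncomputable def resultantAux {R : Type*} [CommRing R] (m n : ℕ) (f g : Polynomial R) : R :=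
  (sylvester m n f g).det

/-- For `F(u,T) = Σᵢ aᵢ(u) Tⁱ`, the partial derivative `∂F/∂u`. -/
noncomputable def coeffDeriv {F : Type*} [Field F] (P : Polynomial (Polynomial F)) :
    Polynomial (Polynomial F) :=
  P.sum fun i a => Polynomial.C (Polynomial.derivative a) * Polynomial.X ^ i

/-- `F`, viewed as a polynomial in `T` over `F_q[u][v]`. -/
noncomputable def liftT {F : Type*} [Field F] (P : Polynomial (Polynomial F)) :
    Polynomial (Polynomial (Polynomial F)) :=
  P.map Polynomial.C

/-- `F_v = ∂F/∂u + v·∂F/∂T`, as a polynomial in `T` over `F_q[u][v]`. -/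
noncomputable def FvPoly {F : Type*} [Field F] (P : Polynomial (Polynomial F)) :
    Polynomial (Polynomial (Polynomial F)) :=
  (coeffDeriv P).map Polynomial.C +
    Polynomial.C (Polynomial.X : Polynomial (Polynomial F)) *
      (Polynomial.derivative P).map Polynomial.C

/-- `R(F, F_v)`: the resultant in `T` of `F` and `F_v`, an element of `F_q[u][v]`
(a polynomial in `v` with coefficients in `F_q[u]`). -/
noncomputable def RFFv {F : Type*} [Field F] (P : Polynomial (Polynomial F)) :
    Polynomial (Polynomial F) :=
  resultantAux (liftT P).natDegree (FvPoly P).natDegree (liftT P) (FvPoly P)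

/-- The embedding `F_q[u] ↪ closure of F_q(u)`. -/
noncomputable def embClosure (F : Type*) [Field F] :
    Polynomial F →+* AlgebraicClosure (FractionRing (Polynomial F)) :=
  (algebraMap (FractionRing (Polynomial F))
      (AlgebraicClosure (FractionRing (Polynomial F)))).comp
    (algebraMap (Polynomial F) (FractionRing (Polynomial F)))

open Polynomial

namespace DiscAux

variable {K : Type*} [Field K]

theorem reflect_reflect {S : Type*} [Semiring S] (N : ℕ) (p : S[X]) :
    reflect N (reflect N p) = p := by
  ext i
  rw [coeff_reflect, coeff_reflect, revAt_invol]

theorem coeff_reflect_eq_zero {S : Type*} [Semiring S] {p : S[X]} {N t : ℕ}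
    (hp : p.natDegree ≤ N) (ht : N < t) : (reflect N p).coeff t = 0 := by
  rw [coeff_reflect, revAt_eq_self_of_lt ht]
  exact coeff_eq_zero_of_natDegree_lt (lt_of_le_of_lt hp ht)

theorem natDegree_reflect_le {S : Type*} [Semiring S] {p : S[X]} {N : ℕ}
    (hp : p.natDegree ≤ N) : (reflect N p).natDegree ≤ N :=
  natDegree_le_iff_coeff_eq_zero.mpr fun _ ht => coeff_reflect_eq_zero hp ht

theorem reflect_eq_zero_iff' {S : Type*} [Semiring S] {p : S[X]} {N : ℕ} :
    reflect N p = 0 ↔ p = 0 :=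
  ⟨fun h => by rw [← reflect_reflect N p, h, reflect_zero],
   fun h => by rw [h, reflect_zero]⟩

theorem sum_coeff_aux (f A : K[X]) (m n : ℕ) (hf : f.natDegree ≤ m)
    (hA : A.degree < (n : ℕ)) (j : ℕ) :
    ∑ i ∈ Finset.range n,
        A.coeff i * (if i ≤ j ∧ j ≤ m + i then f.coeff (m + i - j) else 0) =
      (A * reflect m f).coeff j := by
  have hAc : ∀ i, n ≤ i → A.coeff i = 0 := fun i hi =>
    coeff_eq_zero_of_degree_lt (hA.trans_le (Nat.cast_le.2 hi))
  have key : ∀ i : ℕ,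
      (if i ≤ j then A.coeff i * (reflect m f).coeff (j - i) else 0) =
      A.coeff i * (if i ≤ j ∧ j ≤ m + i then f.coeff (m + i - j) else 0) := by
    intro i
    by_cases hij : i ≤ j
    · by_cases hjm : j ≤ m + i
      · rw [if_pos hij, if_pos ⟨hij, hjm⟩, coeff_reflect, revAt_le (show j - i ≤ m by omega)]
        congr 2
        omega
      · rw [if_pos hij, if_neg (fun h => hjm h.2), mul_zero, coeff_reflect,
          revAt_eq_self_of_lt (show m < j - i by omega),
          coeff_eq_zero_of_natDegree_lt (show f.natDegree < j - i by omega), mul_zero]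
    · rw [if_neg hij, if_neg (fun h => hij h.1), mul_zero]
  set N := max n (j + 1) with hN
  have h1 : ∑ i ∈ Finset.range n,
      A.coeff i * (if i ≤ j ∧ j ≤ m + i then f.coeff (m + i - j) else 0) =
      ∑ i ∈ Finset.range N,
      A.coeff i * (if i ≤ j ∧ j ≤ m + i then f.coeff (m + i - j) else 0) := by
    refine Finset.sum_subset (Finset.range_subset_range.2 (le_max_left _ _)) ?_
    intro i _ hi
    rw [Finset.mem_range, not_lt] at hi
    rw [hAc i hi, zero_mul]
  have h2 : (A * reflect m f).coeff j =
      ∑ i ∈ Finset.range N, (if i ≤ j then A.coeff i * (reflect m f).coeff (j - i) else 0) := by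
    rw [coeff_mul, Finset.Nat.sum_antidiagonal_eq_sum_range_succ_mk]
    rw [show ∑ i ∈ Finset.range (j+1), A.coeff i * (reflect m f).coeff (j - i) =
      ∑ i ∈ Finset.range (j+1), (if i ≤ j then A.coeff i * (reflect m f).coeff (j - i) else 0) from
      Finset.sum_congr rfl fun i hi => by
        rw [if_pos (Nat.lt_succ_iff.mp (Finset.mem_range.mp hi))]]
    refine Finset.sum_subset (Finset.range_subset_range.2 (le_max_right _ _)) ?_
    intro i _ hi
    rw [Finset.mem_range, not_lt] at hi
    rw [if_neg (by omega)]
  rw [h1, h2]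
  exact (Finset.sum_congr rfl fun i _ => key i).symm

theorem comb_coeff_eq_zero {f g A B : K[X]} {m n : ℕ} (hf : f.natDegree ≤ m)
    (hg : g.natDegree ≤ n) (hA : A.degree < (n : ℕ)) (hB : B.degree < (m : ℕ)) {t : ℕ}
    (ht : m + n ≤ t) :
    (A * reflect m f + B * reflect n g).coeff t = 0 := by
  have key : ∀ (p q : K[X]) (a b : ℕ), p.natDegree ≤ a → q.degree < (b : ℕ) → a + b ≤ t →
      (q * reflect a p).coeff t = 0 := by
    intro p q a b hp hq hab
    rw [coeff_mul]
    refine Finset.sum_eq_zero fun x hx => ?_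
    rw [Finset.HasAntidiagonal.mem_antidiagonal] at hx
    rcases le_or_gt b x.1 with h | h
    · rw [coeff_eq_zero_of_degree_lt (hq.trans_le (Nat.cast_le.2 h)), zero_mul]
    · rw [coeff_reflect_eq_zero hp (show a < x.2 by omega), mul_zero]
  rw [coeff_add, key f A m n hf hA (by omega), key g B n m hg hB (by omega), add_zero]

/-- The row combination of the Sylvester matrix is the coefficient vector of
`A * reflect m f + B * reflect n g`. -/
theorem vecMul_sylvester {m n : ℕ} {f g : K[X]} (hf : f.natDegree ≤ m)
    (hg : g.natDegree ≤ n) (A B : K[X]) (hA : A.degree < (n : ℕ)) (hB : B.degree < (m : ℕ))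
    (j : Fin (m + n)) :
    Matrix.vecMul (fun i : Fin (m + n) =>
        if (i : ℕ) < n then A.coeff (i : ℕ) else B.coeff ((i : ℕ) - n)) (sylvester m n f g) j =
      (A * reflect m f + B * reflect n g).coeff (j : ℕ) := by
  have hstep : Matrix.vecMul (fun i : Fin (m + n) =>
        if (i : ℕ) < n then A.coeff (i : ℕ) else B.coeff ((i : ℕ) - n)) (sylvester m n f g) j =
      ∑ i ∈ Finset.range (m + n),
        (fun i' : ℕ => (if i' < n then A.coeff i' else B.coeff (i' - n)) *
        (if i' < n then
          (if i' ≤ (j : ℕ) ∧ (j : ℕ) ≤ m + i' then f.coeff (m + i' - (j : ℕ)) else 0)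
        else
          (if i' - n ≤ (j : ℕ) ∧ (j : ℕ) ≤ n + (i' - n) then g.coeff (n + (i' - n) - (j : ℕ))
            else 0))) i :=
    Fin.sum_univ_eq_sum_range (fun i' : ℕ => (if i' < n then A.coeff i' else B.coeff (i' - n)) *
        (if i' < n then
          (if i' ≤ (j : ℕ) ∧ (j : ℕ) ≤ m + i' then f.coeff (m + i' - (j : ℕ)) else 0)
        else
          (if i' - n ≤ (j : ℕ) ∧ (j : ℕ) ≤ n + (i' - n) then g.coeff (n + (i' - n) - (j : ℕ))
            else 0))) (m + n)
  rw [hstep, show Finset.range (m + n) = Finset.range (n + m) by rw [Nat.add_comm],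
    Finset.sum_range_add]
  have hfirst : ∑ i ∈ Finset.range n,
      (fun i' : ℕ => (if i' < n then A.coeff i' else B.coeff (i' - n)) *
        (if i' < n then
          (if i' ≤ (j : ℕ) ∧ (j : ℕ) ≤ m + i' then f.coeff (m + i' - (j : ℕ)) else 0)
        else
          (if i' - n ≤ (j : ℕ) ∧ (j : ℕ) ≤ n + (i' - n) then g.coeff (n + (i' - n) - (j : ℕ))
            else 0))) i = (A * reflect m f).coeff (j : ℕ) := by
    rw [← sum_coeff_aux f A m n hf hA (j : ℕ)]
    refine Finset.sum_congr rfl fun i hi => ?_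
    rw [Finset.mem_range] at hi
    simp only [hi, if_true]
  have hsecond : ∑ i ∈ Finset.range m,
      (fun i' : ℕ => (if i' < n then A.coeff i' else B.coeff (i' - n)) *
        (if i' < n then
          (if i' ≤ (j : ℕ) ∧ (j : ℕ) ≤ m + i' then f.coeff (m + i' - (j : ℕ)) else 0)
        else
          (if i' - n ≤ (j : ℕ) ∧ (j : ℕ) ≤ n + (i' - n) then g.coeff (n + (i' - n) - (j : ℕ))
            else 0))) (n + i) = (B * reflect n g).coeff (j : ℕ) := by
    rw [← sum_coeff_aux g B n m hg hB (j : ℕ)]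
    refine Finset.sum_congr rfl fun i hi => ?_
    have h1 : ¬ (n + i < n) := by omega
    have h2 : n + i - n = i := by omega
    simp only [h1, if_false, h2]
  rw [hfirst, hsecond, coeff_add]

theorem degree_lt_zero_eq_zero {S : Type*} [Semiring S] {p : S[X]}
    (h : p.degree < ((0 : ℕ) : WithBot ℕ)) : p = 0 := by
  ext t
  rw [coeff_zero]
  exact (degree_lt_iff_coeff_zero p 0).1 h t (Nat.zero_le t)

/-- The Sylvester determinant vanishes iff the "reflected" polynomials admit a
nontrivial linear relation with bounded-degree coefficients. -/
theorem resultantAux_eq_zero_iff_reflect {m n : ℕ} {f g : K[X]} (hf : f.natDegree ≤ m)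
    (hg : g.natDegree ≤ n) :
    resultantAux m n f g = 0 ↔
      ∃ A B : K[X], ¬(A = 0 ∧ B = 0) ∧ A.degree < (n : ℕ) ∧ B.degree < (m : ℕ) ∧
        A * reflect m f + B * reflect n g = 0 := by
  classical
  rw [resultantAux, ← Matrix.exists_vecMul_eq_zero_iff]
  constructor
  · rintro ⟨c, hc0, hc⟩
    set c' : ℕ → K := fun i => if h : i < m + n then c ⟨i, h⟩ else 0 with hc'
    set A : K[X] := ∑ i ∈ Finset.range n, C (c' i) * X ^ i with hA
    set B : K[X] := ∑ i ∈ Finset.range m, C (c' (n + i)) * X ^ i with hB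
    have hcoeffA : ∀ t, A.coeff t = if t < n then c' t else 0 := by
      intro t
      rw [hA, finset_sum_coeff]
      simp only [C_mul_X_pow_eq_monomial, coeff_monomial]
      rw [Finset.sum_ite_eq' (Finset.range n) t (fun i => c' i)]
      simp [Finset.mem_range]
    have hcoeffB : ∀ t, B.coeff t = if t < m then c' (n + t) else 0 := by
      intro t
      rw [hB, finset_sum_coeff]
      simp only [C_mul_X_pow_eq_monomial, coeff_monomial]
      rw [Finset.sum_ite_eq' (Finset.range m) t (fun i => c' (n + i))]
      simp [Finset.mem_range]
    have hdA : A.degree < (n : ℕ) := by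
      rw [degree_lt_iff_coeff_zero]
      intro t ht
      rw [hcoeffA, if_neg (by exact_mod_cast not_lt.2 (by exact_mod_cast ht))]
    have hdB : B.degree < (m : ℕ) := by
      rw [degree_lt_iff_coeff_zero]
      intro t ht
      rw [hcoeffB, if_neg (by exact_mod_cast not_lt.2 (by exact_mod_cast ht))]
    have hc'app : ∀ (t : ℕ) (h : t < m + n), c' t = c ⟨t, h⟩ := fun t h => dif_pos h
    have hcfun : (fun i : Fin (m + n) =>
        if (i : ℕ) < n then A.coeff (i : ℕ) else B.coeff ((i : ℕ) - n)) = c := by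
      funext i
      by_cases hi : (i : ℕ) < n
      · rw [if_pos hi, hcoeffA, if_pos hi, hc'app (i : ℕ) i.isLt]
      · rw [if_neg hi, hcoeffB, if_pos (by omega),
          hc'app (n + ((i:ℕ) - n)) (by omega)]
        congr
        omega
    refine ⟨A, B, ?_, hdA, hdB, ?_⟩
    · rintro ⟨hA0, hB0⟩
      apply hc0
      funext i
      rw [← hcfun]
      by_cases hi : (i : ℕ) < n
      · simp [hi, hA0]
      · simp [hi, hB0]
    · ext t
      rw [coeff_zero]
      by_cases ht : t < m + n
      · have := congrFun hc ⟨t, ht⟩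
        rw [← hcfun] at this
        rw [← vecMul_sylvester hf hg A B hdA hdB ⟨t, ht⟩]
        exact this
      · exact comb_coeff_eq_zero hf hg hdA hdB (by omega)
  · rintro ⟨A, B, hAB, hdA, hdB, hcomb⟩
    refine ⟨fun i : Fin (m + n) =>
        if (i : ℕ) < n then A.coeff (i : ℕ) else B.coeff ((i : ℕ) - n), ?_, ?_⟩
    · intro h0
      apply hAB
      constructor
      · ext t
        rw [coeff_zero]
        by_cases ht : t < n
        · have := congrFun h0 ⟨t, by omega⟩
          simpa [ht] using this
        · exact coeff_eq_zero_of_degree_lt (hdA.trans_le (Nat.cast_le.2 (by omega)))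
      · ext t
        rw [coeff_zero]
        by_cases ht : t < m
        · have := congrFun h0 ⟨n + t, by omega⟩
          simpa [show ¬ (n + t < n) by omega] using this
        · exact coeff_eq_zero_of_degree_lt (hdB.trans_le (Nat.cast_le.2 (by omega)))
    · funext j
      rw [vecMul_sylvester hf hg A B hdA hdB j, hcomb, coeff_zero]
      rfl

/-- Transfer a reflected relation to a direct relation. -/
theorem exists_comb_of_reflect {m n : ℕ} {f g : K[X]} (hf : f.natDegree ≤ m)
    (hg : g.natDegree ≤ n) (A B : K[X]) (hAB : ¬(A = 0 ∧ B = 0)) (hdA : A.degree < (n : ℕ))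
    (hdB : B.degree < (m : ℕ)) (hcomb : A * reflect m f + B * reflect n g = 0) :
    ∃ a b : K[X], ¬(a = 0 ∧ b = 0) ∧ a.degree < (n : ℕ) ∧ b.degree < (m : ℕ) ∧
      a * f + b * g = 0 := by
  rcases Nat.eq_zero_or_pos n with hn | hn
  · subst hn
    have hA0 : A = 0 := degree_lt_zero_eq_zero hdA
    have hB0 : B ≠ 0 := fun h => hAB ⟨hA0, h⟩
    have hg0 : g = 0 := by
      have : B * reflect 0 g = 0 := by rw [← hcomb, hA0]; ring
      rcases mul_eq_zero.1 this with h | h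
      · exact absurd h hB0
      · exact reflect_eq_zero_iff'.1 h
    exact ⟨0, B, fun h => hB0 h.2, by simpa using hdA, hdB, by rw [hg0, zero_mul, mul_zero, add_zero]⟩
  rcases Nat.eq_zero_or_pos m with hm | hm
  · subst hm
    have hB0 : B = 0 := degree_lt_zero_eq_zero hdB
    have hA0 : A ≠ 0 := fun h => hAB ⟨h, hB0⟩
    have hf0 : f = 0 := by
      have : A * reflect 0 f = 0 := by rw [← hcomb, hB0]; ring
      rcases mul_eq_zero.1 this with h | h
      · exact absurd h hA0
      · exact reflect_eq_zero_iff'.1 h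
    exact ⟨A, 0, fun h => hA0 h.1, hdA, by simpa using hdB, by rw [hf0, mul_zero, zero_mul, add_zero]⟩
  -- main case
  have hAd : A.natDegree ≤ n - 1 := by
    rcases eq_or_ne A 0 with h | h
    · simp [h]
    · have := (natDegree_lt_iff_degree_lt h).2 hdA
      omega
  have hBd : B.natDegree ≤ m - 1 := by
    rcases eq_or_ne B 0 with h | h
    · simp [h]
    · have := (natDegree_lt_iff_degree_lt h).2 hdB
      omega
  refine ⟨reflect (n - 1) A, reflect (m - 1) B, ?_, ?_, ?_, ?_⟩
  · rintro ⟨h1, h2⟩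
    exact hAB ⟨reflect_eq_zero_iff'.1 h1, reflect_eq_zero_iff'.1 h2⟩
  · rw [degree_lt_iff_coeff_zero]
    intro t ht
    have ht' : n ≤ t := by exact_mod_cast ht
    rw [coeff_reflect, revAt_eq_self_of_lt (by omega)]
    exact coeff_eq_zero_of_degree_lt (hdA.trans_le (Nat.cast_le.2 ht'))
  · rw [degree_lt_iff_coeff_zero]
    intro t ht
    have ht' : m ≤ t := by exact_mod_cast ht
    rw [coeff_reflect, revAt_eq_self_of_lt (by omega)]
    exact coeff_eq_zero_of_degree_lt (hdB.trans_le (Nat.cast_le.2 ht'))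
  · have e1 : reflect (m + n - 1) (A * reflect m f) = reflect (n - 1) A * f := by
      rw [show m + n - 1 = (n - 1) + m by omega,
        reflect_mul A (reflect m f) hAd (natDegree_reflect_le hf), reflect_reflect]
    have e2 : reflect (m + n - 1) (B * reflect n g) = reflect (m - 1) B * g := by
      rw [show m + n - 1 = (m - 1) + n by omega,
        reflect_mul B (reflect n g) hBd (natDegree_reflect_le hg), reflect_reflect]
    rw [← e1, ← e2, ← reflect_add, hcomb, reflect_zero]

/-- The Sylvester determinant vanishes iff `f`, `g` admit a nontrivial relation
`a f + b g = 0` with bounded degrees. -/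
theorem resultantAux_eq_zero_iff {m n : ℕ} {f g : K[X]} (hf : f.natDegree ≤ m)
    (hg : g.natDegree ≤ n) :
    resultantAux m n f g = 0 ↔
      ∃ a b : K[X], ¬(a = 0 ∧ b = 0) ∧ a.degree < (n : ℕ) ∧ b.degree < (m : ℕ) ∧
        a * f + b * g = 0 := by
  rw [resultantAux_eq_zero_iff_reflect hf hg]
  constructor
  · rintro ⟨A, B, h1, h2, h3, h4⟩
    exact exists_comb_of_reflect hf hg A B h1 h2 h3 h4
  · rintro ⟨a, b, h1, h2, h3, h4⟩
    have h4' : a * reflect m (reflect m f) + b * reflect n (reflect n g) = 0 := by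
      rw [reflect_reflect, reflect_reflect]; exact h4
    exact exists_comb_of_reflect (natDegree_reflect_le hf) (natDegree_reflect_le hg)
      a b h1 h2 h3 h4'

/-- Coprime polynomials, with the first of exact degree `m`, have nonzero resultant. -/
theorem resultantAux_ne_zero_of_isCoprime {m n : ℕ} {f g : K[X]} (hfm : f.natDegree = m)
    (hf0 : f ≠ 0) (hg : g.natDegree ≤ n) (hco : IsCoprime f g) :
    resultantAux m n f g ≠ 0 := by
  intro h0
  obtain ⟨a, b, hab, hda, hdb, hcomb⟩ := (resultantAux_eq_zero_iff (le_of_eq hfm) hg).1 h0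
  have hdvd : f ∣ b * g := ⟨-a, by linear_combination hcomb⟩
  have hfb : f ∣ b := hco.dvd_of_dvd_mul_right hdvd
  have hb0 : b = 0 := by
    refine eq_zero_of_dvd_of_degree_lt hfb ?_
    rw [degree_eq_natDegree hf0, hfm]
    exact hdb
  have ha0 : a = 0 := by
    have : a * f = 0 := by rw [← hcomb, hb0]; ring
    rcases mul_eq_zero.1 this with h | h
    · exact h
    · exact absurd h hf0
  exact hab ⟨ha0, hb0⟩

/-- If `f` and `g` have a common root then the resultant vanishes (assuming `1 ≤ m`). -/
theorem resultantAux_eq_zero_of_common_root {m n : ℕ} {f g : K[X]} (hm : 1 ≤ m)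
    (hf : f.natDegree ≤ m) (hg : g.natDegree ≤ n) {α : K} (hfα : f.eval α = 0)
    (hgα : g.eval α = 0) : resultantAux m n f g = 0 := by
  rw [resultantAux_eq_zero_iff hf hg]
  rcases eq_or_ne g 0 with hg0 | hg0
  · refine ⟨0, 1, fun h => one_ne_zero h.2, ?_, ?_, by rw [hg0, zero_mul, mul_zero, add_zero]⟩
    · rw [degree_zero]
      exact bot_lt_iff_ne_bot.2 (by simp)
    · rw [degree_one]
      exact_mod_cast hm
  rcases eq_or_ne f 0 with hf0 | hf0
  · have h1 : (0 : WithBot ℕ) < g.degree := degree_pos_of_root hg0 hgα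
    have h2 : g.degree ≤ ((n : ℕ) : WithBot ℕ) := natDegree_le_iff_degree_le.1 hg
    have hn : 0 < n := by exact_mod_cast lt_of_lt_of_le h1 h2
    refine ⟨1, 0, fun h => one_ne_zero h.1, ?_, ?_, by rw [hf0]; ring⟩
    · rw [degree_one]
      exact_mod_cast hn
    · rw [degree_zero]
      exact bot_lt_iff_ne_bot.2 (by simp)
  · obtain ⟨f₁, hf₁⟩ := (dvd_iff_isRoot.2 hfα : (X - C α) ∣ f)
    obtain ⟨g₁, hg₁⟩ := (dvd_iff_isRoot.2 hgα : (X - C α) ∣ g)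
    have hf₁0 : f₁ ≠ 0 := fun h => hf0 (by rw [hf₁, h, mul_zero])
    have hg₁0 : g₁ ≠ 0 := fun h => hg0 (by rw [hg₁, h, mul_zero])
    have hdg : g₁.degree < (n : ℕ) := by
      have h1 : g.degree = 1 + g₁.degree := by rw [hg₁, degree_mul, degree_X_sub_C]
      have h2 : g₁.degree < g.degree := by
        rw [h1, degree_eq_natDegree hg₁0]
        exact_mod_cast (show g₁.natDegree < 1 + g₁.natDegree by omega)
      exact lt_of_lt_of_le h2 ((natDegree_le_iff_degree_le).1 hg)
    have hdf : f₁.degree < (m : ℕ) := by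
      have h1 : f.degree = 1 + f₁.degree := by rw [hf₁, degree_mul, degree_X_sub_C]
      have h2 : f₁.degree < f.degree := by
        rw [h1, degree_eq_natDegree hf₁0]
        exact_mod_cast (show f₁.natDegree < 1 + f₁.natDegree by omega)
      exact lt_of_lt_of_le h2 ((natDegree_le_iff_degree_le).1 hf)
    refine ⟨g₁, -f₁, fun h => hg₁0 h.1, hdg, by rwa [degree_neg], ?_⟩
    rw [hf₁, hg₁]
    ring

/-- Over an algebraically closed field, vanishing resultant yields a common root. -/
theorem exists_common_root_of_resultantAux_eq_zero [IsAlgClosed K] {m n : ℕ} {f g : K[X]}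
    (hm : 1 ≤ m) (hfm : f.natDegree = m) (hf0 : f ≠ 0) (hg : g.natDegree ≤ n)
    (h0 : resultantAux m n f g = 0) : ∃ α : K, f.eval α = 0 ∧ g.eval α = 0 := by
  classical
  have hnc : ¬ IsCoprime f g := fun hco =>
    resultantAux_ne_zero_of_isCoprime hfm hf0 hg hco h0
  set d := EuclideanDomain.gcd f g with hd
  have hdu : ¬ IsUnit d := fun hu => hnc (EuclideanDomain.gcd_isUnit_iff.1 hu)
  have hd0 : d ≠ 0 := fun h => hf0 ((EuclideanDomain.gcd_eq_zero_iff.1 h).1)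
  have hdeg : d.degree ≠ 0 := fun h => hdu (isUnit_iff_degree_eq_zero.2 h)
  obtain ⟨α, hα⟩ := IsAlgClosed.exists_root d hdeg
  exact ⟨α, eval_eq_zero_of_dvd_of_eval_eq_zero (EuclideanDomain.gcd_dvd_left f g) hα,
    eval_eq_zero_of_dvd_of_eval_eq_zero (EuclideanDomain.gcd_dvd_right f g) hα⟩

/-- Resultants commute with ring homomorphisms. -/
theorem resultantAux_map {R S : Type*} [CommRing R] [CommRing S] (φ : R →+* S) (m n : ℕ)
    (f g : Polynomial R) :
    φ (resultantAux m n f g) = resultantAux m n (f.map φ) (g.map φ) := by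
  rw [resultantAux, resultantAux, RingHom.map_det]
  congr 1
  ext i j
  simp only [RingHom.mapMatrix_apply, Matrix.map_apply, _root_.sylvester, Matrix.of_apply,
    apply_ite φ, map_zero, coeff_map]

/-- Degree bound for determinants of polynomial matrices, row-wise. -/
theorem natDegree_det_le {R : Type*} [CommRing R] {N : ℕ}
    (M : Matrix (Fin N) (Fin N) (Polynomial R)) (d : Fin N → ℕ)
    (h : ∀ i j, (M i j).natDegree ≤ d i) :
    M.det.natDegree ≤ ∑ i, d i := by
  rw [Matrix.det_apply']
  refine natDegree_sum_le_of_forall_le _ _ fun σ _ => ?_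
  refine (natDegree_mul_le).trans ?_
  rw [natDegree_intCast]
  rw [zero_add]
  refine (natDegree_prod_le _ _).trans ?_
  rw [← Equiv.sum_comp σ d]
  exact Finset.sum_le_sum fun i _ => h (σ i) i

theorem coeff_prod_of_natDegree_le' {R : Type*} [CommRing R] {ι : Type*} (s : Finset ι)
    (f : ι → Polynomial R) (d : ι → ℕ) (h : ∀ i ∈ s, (f i).natDegree ≤ d i) :
    (∏ i ∈ s, f i).coeff (∑ i ∈ s, d i) = ∏ i ∈ s, (f i).coeff (d i) := by
  classical
  revert h
  induction s using Finset.induction_on with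
  | empty => intro h; simp
  | @insert a s' ha ih =>
    intro h
    rw [Finset.prod_insert ha, Finset.sum_insert ha, Finset.prod_insert ha,
      coeff_mul_add_eq_of_natDegree_le (h a (Finset.mem_insert_self a s'))
        ((natDegree_prod_le _ _).trans (Finset.sum_le_sum fun i hi =>
          h i (Finset.mem_insert_of_mem hi)))]
    rw [ih fun i hi => h i (Finset.mem_insert_of_mem hi)]

/-- Top coefficient of a determinant of a polynomial matrix with row-degree bounds. -/
theorem coeff_det_top {R : Type*} [CommRing R] {N : ℕ}
    (M : Matrix (Fin N) (Fin N) (Polynomial R)) (d : Fin N → ℕ)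
    (h : ∀ i j, (M i j).natDegree ≤ d i) :
    M.det.coeff (∑ i, d i) = (Matrix.of fun i j => (M i j).coeff (d i)).det := by
  rw [Matrix.det_apply', Matrix.det_apply', finset_sum_coeff]
  refine Finset.sum_congr rfl fun σ _ => ?_
  rw [show ((Equiv.Perm.sign σ : ℤ) : Polynomial R) = C ((Equiv.Perm.sign σ : ℤ) : R) by
    rw [map_intCast], coeff_C_mul]
  congr 1
  rw [← Equiv.sum_comp σ d]
  rw [coeff_prod_of_natDegree_le' _ _ _ fun i _ => h (σ i) i]
  rfl

section Specific

variable {F : Type*} [Field F] (P : Polynomial (Polynomial F))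

theorem coeffDeriv_coeff (j : ℕ) :
    (coeffDeriv P).coeff j = Polynomial.derivative (P.coeff j) := by
  rw [coeffDeriv, Polynomial.sum_def, finset_sum_coeff]
  simp only [C_mul_X_pow_eq_monomial, coeff_monomial]
  rw [Finset.sum_ite_eq' P.support j (fun i => Polynomial.derivative (P.coeff i))]
  split_ifs with h
  · rfl
  · rw [Polynomial.notMem_support_iff.1 h, map_zero]

theorem liftT_coeff (j : ℕ) : (liftT P).coeff j = Polynomial.C (P.coeff j) :=
  coeff_map _ _

theorem natDegree_liftT : (liftT P).natDegree = P.natDegree :=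
  natDegree_map_eq_of_injective (Polynomial.C_injective) P

theorem FvPoly_coeff (j : ℕ) : (FvPoly P).coeff j =
    Polynomial.C ((coeffDeriv P).coeff j) +
      Polynomial.X * Polynomial.C ((Polynomial.derivative P).coeff j) := by
  rw [FvPoly, coeff_add, coeff_map, coeff_C_mul, coeff_map]

theorem coeff_one_CXC (a b : Polynomial F) :
    (Polynomial.C a + Polynomial.X * Polynomial.C b).coeff 1 = b := by
  rw [coeff_add, Polynomial.coeff_C, if_neg one_ne_zero, zero_add,
    show (1 : ℕ) = 0 + 1 from rfl, coeff_X_mul, coeff_C_zero]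

theorem natDegree_CXC_le (a b : Polynomial F) :
    (Polynomial.C a + Polynomial.X * Polynomial.C b).natDegree ≤ 1 := by
  refine (natDegree_add_le _ _).trans (max_le (by simp) ?_)
  refine (natDegree_mul_le).trans ?_
  simp

theorem natDegree_derivative_le_FvPoly :
    (Polynomial.derivative P).natDegree ≤ (FvPoly P).natDegree := by
  rcases eq_or_ne (Polynomial.derivative P) 0 with h | h
  · simp [h]
  · apply le_natDegree_of_ne_zero
    rw [FvPoly_coeff]
    intro h0
    have h1 := congrArg (fun q : Polynomial (Polynomial F) => q.coeff 1) h0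
    simp only [coeff_one_CXC, coeff_zero] at h1
    exact leadingCoeff_ne_zero.mpr h h1

theorem liftT_map_eval₂ {S : Type*} [CommRing S] (φ : Polynomial F →+* S) (v0 : S) :
    (liftT P).map (Polynomial.eval₂RingHom φ v0) = P.map φ := by
  rw [liftT, Polynomial.map_map]
  congr 1
  exact RingHom.ext fun r => eval₂_C φ v0

theorem FvPoly_map_eval₂ {S : Type*} [CommRing S] (φ : Polynomial F →+* S) (v0 : S) :
    (FvPoly P).map (Polynomial.eval₂RingHom φ v0) =
      (coeffDeriv P).map φ + Polynomial.C v0 * (Polynomial.derivative P).map φ := by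
  rw [FvPoly, Polynomial.map_add, Polynomial.map_mul, Polynomial.map_map, Polynomial.map_map,
    Polynomial.map_C]
  congr 1
  · congr 1
    exact RingHom.ext fun r => eval₂_C φ v0
  · congr 1
    · rw [coe_eval₂RingHom, eval₂_X]
    · congr 1
      exact RingHom.ext fun r => eval₂_C φ v0

theorem RFFv_eval₂ {S : Type*} [CommRing S] (φ : Polynomial F →+* S) (v0 : S) :
    Polynomial.eval₂ φ v0 (RFFv P) =
      resultantAux (liftT P).natDegree (FvPoly P).natDegree (P.map φ)
        ((coeffDeriv P).map φ + Polynomial.C v0 * (Polynomial.derivative P).map φ) := by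
  have h := resultantAux_map (Polynomial.eval₂RingHom φ v0)
    (liftT P).natDegree (FvPoly P).natDegree (liftT P) (FvPoly P)
  rw [show Polynomial.eval₂ φ v0 (RFFv P) = Polynomial.eval₂RingHom φ v0 (RFFv P) from rfl,
    RFFv, h, liftT_map_eval₂, FvPoly_map_eval₂]

theorem coeff_RFFv :
    (RFFv P).coeff ((liftT P).natDegree) =
      resultantAux (liftT P).natDegree (FvPoly P).natDegree P (Polynomial.derivative P) := by
  set m := (liftT P).natDegree with hm
  set n := (FvPoly P).natDegree with hn
  set M := sylvester m n (liftT P) (FvPoly P) with hM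
  set d : Fin (m + n) → ℕ := fun i => if (i : ℕ) < n then 0 else 1 with hd
  have hdeg : ∀ i j, (M i j).natDegree ≤ d i := by
    intro i j
    rw [hM, hd]
    simp only [_root_.sylvester, Matrix.of_apply]
    by_cases hi : (i : ℕ) < n
    · rw [if_pos hi, if_pos hi]
      split_ifs with h
      · rw [liftT_coeff]
        simp
      · simp
    · rw [if_neg hi, if_neg hi]
      split_ifs with h
      · rw [FvPoly_coeff]
        exact natDegree_CXC_le _ _
      · simp
  have hsum : ∑ i, d i = m := by
    rw [hd]
    have h1 : ∑ i : Fin (m + n), (fun i' : ℕ => if i' < n then 0 else 1) (i : ℕ) =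
        ∑ i ∈ Finset.range (m + n), (fun i' : ℕ => if i' < n then 0 else 1) i :=
      Fin.sum_univ_eq_sum_range (fun i' : ℕ => if i' < n then 0 else 1) (m + n)
    rw [show (fun i : Fin (m+n) => if (i : ℕ) < n then 0 else 1) =
      (fun i : Fin (m+n) => (fun i' : ℕ => if i' < n then 0 else 1) (i : ℕ)) from rfl, h1,
      show Finset.range (m + n) = Finset.range (n + m) by rw [Nat.add_comm],
      Finset.sum_range_add]
    simp

  have htop := coeff_det_top M d hdeg
  rw [hsum] at htop
  rw [show RFFv P = M.det from rfl, htop]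
  rw [resultantAux]
  congr 1
  ext i j : 2
  rw [Matrix.of_apply, hd]
  simp only [_root_.sylvester, Matrix.of_apply, hM]
  by_cases hi : (i : ℕ) < n
  · rw [if_pos hi, if_pos hi, if_pos hi]
    split_ifs with h
    · rw [liftT_coeff, coeff_C_zero]
    · rw [coeff_zero]
  · rw [if_neg hi, if_neg hi, if_neg hi]
    split_ifs with h
    · rw [FvPoly_coeff, coeff_one_CXC]
    · rw [coeff_zero]

theorem isCoprime_of_isUnit_left' {R : Type*} [CommSemiring R] {x y : R} (h : IsUnit x) :
    IsCoprime x y := by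
  obtain ⟨u, rfl⟩ := h
  exact ⟨(↑u⁻¹ : R), 0, by simp⟩

theorem natDegree_RFFv_le : (RFFv P).natDegree ≤ (liftT P).natDegree := by
  set m := (liftT P).natDegree with hm
  set n := (FvPoly P).natDegree with hn
  set M := sylvester m n (liftT P) (FvPoly P) with hM
  set d : Fin (m + n) → ℕ := fun i => if (i : ℕ) < n then 0 else 1 with hd
  have hdeg : ∀ i j, (M i j).natDegree ≤ d i := by
    intro i j
    rw [hM, hd]
    simp only [_root_.sylvester, Matrix.of_apply]
    by_cases hi : (i : ℕ) < n
    · rw [if_pos hi, if_pos hi]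
      split_ifs with h
      · rw [liftT_coeff]
        simp
      · simp
    · rw [if_neg hi, if_neg hi]
      split_ifs with h
      · rw [FvPoly_coeff]
        exact natDegree_CXC_le _ _
      · simp
  have hsum : ∑ i, d i = m := by
    rw [hd]
    have h1 : ∑ i : Fin (m + n), (fun i' : ℕ => if i' < n then 0 else 1) (i : ℕ) =
        ∑ i ∈ Finset.range (m + n), (fun i' : ℕ => if i' < n then 0 else 1) i :=
      Fin.sum_univ_eq_sum_range (fun i' : ℕ => if i' < n then 0 else 1) (m + n)
    rw [show (fun i : Fin (m+n) => if (i : ℕ) < n then 0 else 1) =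
      (fun i : Fin (m+n) => (fun i' : ℕ => if i' < n then 0 else 1) (i : ℕ)) from rfl, h1,
      show Finset.range (m + n) = Finset.range (n + m) by rw [Nat.add_comm],
      Finset.sum_range_add]
    simp
  have := natDegree_det_le M d hdeg
  rw [hsum] at this
  exact this

end Specific

end DiscAux

open Polynomial DiscAux in
/-- Let `F(u,T) ∈ F_q[u,T]` be separable of degree `k ≥ 1` in `T`, with roots
`α₁, …, α_k` in an algebraic closure of `F_q(u)`, and `F_v = ∂F/∂u + v·∂F/∂T`.  Then the
discriminant in `v` of the resultant `R(F,F_v)` (i.e. any `Δ ∈ F_q[u]` with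
`lc^{2d-1}·Δ = (-1)^{d(d-1)/2}·R_{d,d-1}(g, dg/dv)` for `g = R(F,F_v)`, `d = deg_v g`)
is a nonzero polynomial iff the values `(∂F/∂u)/(∂F/∂T)(u, αᵢ)` are pairwise distinct. -/
theorem discriminant_nonzero_iff_distinct_values (F : Type*) [Field F] [Fintype F]
    (k : ℕ) (hk : 1 ≤ k) (P : Polynomial (Polynomial F)) (hdegT : P.natDegree = k)
    (hsep : (P.map (algebraMap (Polynomial F) (FractionRing (Polynomial F)))).Separable) :
    ∀ Δ : Polynomial F,
      (RFFv P).leadingCoeff ^ (2 * (RFFv P).natDegree - 1) * Δ =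
          (-1) ^ ((RFFv P).natDegree * ((RFFv P).natDegree - 1) / 2) *
            resultantAux (RFFv P).natDegree ((RFFv P).natDegree - 1) (RFFv P)
              (Polynomial.derivative (RFFv P)) →
      (Δ ≠ 0 ↔
        ∀ α β : AlgebraicClosure (FractionRing (Polynomial F)),
          (P.map (embClosure F)).eval α = 0 → (P.map (embClosure F)).eval β = 0 → α ≠ β →
            ((coeffDeriv P).map (embClosure F)).eval α /
                ((Polynomial.derivative P).map (embClosure F)).eval α ≠
              ((coeffDeriv P).map (embClosure F)).eval β /
                ((Polynomial.derivative P).map (embClosure F)).eval β) := by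
  
  classical
  intro Δ hΔ
  set emb := embClosure F with hemb
  set m := (liftT P).natDegree with hm'
  set n := (FvPoly P).natDegree with hn'
  set g := RFFv P with hg'
  set Pb := P.map emb with hPb
  set A := (coeffDeriv P).map emb with hA
  set B := (Polynomial.derivative P).map emb with hB
  have hembinj : Function.Injective emb := by
    rw [hemb, embClosure, RingHom.coe_comp]
    exact (RingHom.injective _).comp (IsFractionRing.injective (Polynomial F) (FractionRing (Polynomial F)))
  have hP0 : P ≠ 0 := fun h => by
    rw [h, natDegree_zero] at hdegT
    omega
  have hmk : m = k := by rw [hm', natDegree_liftT, hdegT]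
  have hPbdeg : Pb.natDegree = k := by
    rw [hPb, natDegree_map_eq_of_injective hembinj, hdegT]
  have hPb0 : Pb ≠ 0 := fun h => hP0 ((Polynomial.map_eq_zero_iff hembinj).1 h)
  have hsep' : Pb.Separable := by
    rw [hPb, hemb, embClosure, ← Polynomial.map_map]
    exact hsep.map
  have hBder : B = Polynomial.derivative Pb := by
    rw [hB, hPb, derivative_map]
  have hBne : ∀ α, Pb.eval α = 0 → B.eval α ≠ 0 := by
    intro α hα hBα
    obtain ⟨a, b, hab⟩ := hsep'
    have := congrArg (Polynomial.eval α) hab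
    rw [hBder] at hBα
    simp [hα, hBα] at this
  -- evaluation of the mapped resultant polynomial
  have heval : ∀ v0, (g.map emb).eval v0 =
      resultantAux m n Pb (Polynomial.C v0 * B + A) := by
    intro v0
    rw [Polynomial.eval_map, hg', RFFv_eval₂ P emb v0]
    congr 1
    ring
  have hnA : ∀ v0, (Polynomial.C v0 * B + A).natDegree ≤ n := by
    intro v0
    have : (Polynomial.C v0 * B + A) = (FvPoly P).map (Polynomial.eval₂RingHom emb v0) := by
      rw [FvPoly_map_eval₂ P emb v0]
      ring
    rw [this, hn']
    exact natDegree_map_le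
  have hroot : ∀ v0, (g.map emb).eval v0 = 0 ↔
      ∃ α, Pb.eval α = 0 ∧ v0 = -(A.eval α / B.eval α) := by
    intro v0
    constructor
    · intro h
      rw [heval] at h
      obtain ⟨α, h1, h2⟩ := exists_common_root_of_resultantAux_eq_zero
        (by omega) (hPbdeg.trans hmk.symm) hPb0 (hnA v0) h
      refine ⟨α, h1, ?_⟩
      have hb := hBne α h1
      rw [Polynomial.eval_add, Polynomial.eval_mul, Polynomial.eval_C] at h2
      field_simp
      linear_combination h2
    · rintro ⟨α, h1, rfl⟩
      rw [heval]
      refine resultantAux_eq_zero_of_common_root (by omega)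
        (le_of_eq (hPbdeg.trans hmk.symm)) (hnA _) h1 ?_
      have hb := hBne α h1
      rw [Polynomial.eval_add, Polynomial.eval_mul, Polynomial.eval_C]
      field_simp
      ring
  -- nonvanishing of the top coefficient
  have hres : resultantAux m n P (Polynomial.derivative P) ≠ 0 := by
    intro h0
    set ψ := algebraMap (Polynomial F) (FractionRing (Polynomial F)) with hψ
    have hψinj : Function.Injective ψ :=
      IsFractionRing.injective (Polynomial F) (FractionRing (Polynomial F))
    have hmap := resultantAux_map ψ m n P (Polynomial.derivative P)
    rw [h0, map_zero] at hmap
    refine resultantAux_ne_zero_of_isCoprime ?_ ?_ ?_ ?_ hmap.symm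
    · rw [natDegree_map_eq_of_injective hψinj, hdegT, hmk]
    · exact fun h => hP0 ((Polynomial.map_eq_zero_iff hψinj).1 h)
    · exact natDegree_map_le.trans (natDegree_derivative_le_FvPoly P)
    · have := hsep
      rw [Polynomial.Separable, derivative_map] at this
      exact this
  have hgcoeff : g.coeff m ≠ 0 := by
    rw [hg', hm', coeff_RFFv P]
    exact hres
  have hg0 : g ≠ 0 := fun h => hgcoeff (by rw [h, Polynomial.coeff_zero])
  have hgdeg : g.natDegree = k := by
    refine le_antisymm ?_ ?_
    · rw [← hmk, hg', hm']
      exact natDegree_RFFv_le P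
    · rw [← hmk]
      exact le_natDegree_of_ne_zero hgcoeff
  -- the mapped resultant polynomial over the closure
  set gb := g.map emb with hgb
  have hgbdeg : gb.natDegree = k := by
    rw [hgb, natDegree_map_eq_of_injective hembinj, hgdeg]
  have hgb0 : gb ≠ 0 := fun h => hg0 ((Polynomial.map_eq_zero_iff hembinj).1 h)
  have hlc : g.leadingCoeff ≠ 0 := leadingCoeff_ne_zero.2 hg0
  have h1 : (Δ ≠ 0 ↔
      resultantAux g.natDegree (g.natDegree - 1) g (Polynomial.derivative g) ≠ 0) := by
    constructor
    · intro hΔ0 hR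
      rw [hR, mul_zero] at hΔ
      rcases mul_eq_zero.1 hΔ with h | h
      · exact pow_ne_zero _ hlc h
      · exact hΔ0 h
    · intro hR hΔ0
      rw [hΔ0, mul_zero] at hΔ
      rcases mul_eq_zero.1 hΔ.symm with h | h
      · exact pow_ne_zero _ (neg_ne_zero.2 (one_ne_zero : (1 : Polynomial F) ≠ 0)) h
      · exact hR h
  have hmapR : emb (resultantAux g.natDegree (g.natDegree - 1) g (Polynomial.derivative g)) =
      resultantAux g.natDegree (g.natDegree - 1) gb (Polynomial.derivative gb) := by
    rw [resultantAux_map emb, hgb, derivative_map]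
  have h2 : (resultantAux g.natDegree (g.natDegree - 1) g (Polynomial.derivative g) ≠ 0 ↔
      resultantAux g.natDegree (g.natDegree - 1) gb (Polynomial.derivative gb) ≠ 0) := by
    rw [← hmapR]
    exact (not_congr (map_eq_zero_iff emb hembinj)).symm
  rw [h1, h2]
  set T := Pb.roots.toFinset with hT
  have hPbroots : Pb.roots.card = k := by
    rw [← hPbdeg]
    exact splits_iff_card_roots.1 (IsAlgClosed.splits Pb)
  have hTcard : T.card = k := by
    rw [hT, Multiset.toFinset_card_eq_card_iff_nodup.2 (Polynomial.nodup_roots hsep'),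
      hPbroots]
  have hTg : gb.roots.toFinset =
      T.image (fun α => -(Polynomial.eval α A / Polynomial.eval α B)) := by
    ext v0
    rw [Multiset.mem_toFinset, Polynomial.mem_roots', Finset.mem_image]
    constructor
    · rintro ⟨-, hv⟩
      obtain ⟨α, ha1, ha2⟩ := (hroot v0).1 hv
      exact ⟨α, Multiset.mem_toFinset.2 (Polynomial.mem_roots'.2 ⟨hPb0, ha1⟩), ha2.symm⟩
    · rintro ⟨α, hα, rfl⟩
      have hα' := (Polynomial.mem_roots'.1 (Multiset.mem_toFinset.1 hα)).2
      exact ⟨hgb0, (hroot _).2 ⟨α, hα', rfl⟩⟩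
  have hgbroots : gb.roots.card = k := by
    rw [← hgbdeg]
    exact splits_iff_card_roots.1 (IsAlgClosed.splits gb)
  constructor
  · intro hR α β hα hβ hne heq
    have hnodupg : gb.roots.Nodup := by
      by_contra hnd
      rw [Multiset.nodup_iff_count_le_one] at hnd
      push_neg at hnd
      obtain ⟨r, hr⟩ := hnd
      have h2le : 2 ≤ Polynomial.rootMultiplicity r gb := by
        rw [← Polynomial.count_roots]
        omega
      obtain ⟨q, hq⟩ : (Polynomial.X - Polynomial.C r) ^ 2 ∣ gb :=
        dvd_trans (pow_dvd_pow _ h2le) (Polynomial.pow_rootMultiplicity_dvd gb r)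
      have hgr : gb.eval r = 0 := by simp [hq]
      have hgr' : (Polynomial.derivative gb).eval r = 0 := by
        rw [hq, derivative_mul, derivative_pow]
        simp
      exact hR (resultantAux_eq_zero_of_common_root (by omega)
        (le_of_eq (hgbdeg.trans hgdeg.symm))
        ((natDegree_derivative_le gb).trans (by rw [hgbdeg, hgdeg])) hgr hgr')
    have hcardg : gb.roots.toFinset.card = k := by
      rw [Multiset.toFinset_card_eq_card_iff_nodup.2 hnodupg, hgbroots]
    have hinj : Set.InjOn (fun α => -(Polynomial.eval α A / Polynomial.eval α B)) T :=
      Finset.injOn_of_card_image_eq (by rw [← hTg, hcardg, hTcard])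
    have hαT : α ∈ T := Multiset.mem_toFinset.2 (Polynomial.mem_roots'.2 ⟨hPb0, hα⟩)
    have hβT : β ∈ T := Multiset.mem_toFinset.2 (Polynomial.mem_roots'.2 ⟨hPb0, hβ⟩)
    refine hne (hinj hαT hβT ?_)
    show -(Polynomial.eval α A / Polynomial.eval α B) = -(Polynomial.eval β A / Polynomial.eval β B)
    rw [heq]
  · intro hdist
    have hinj : Set.InjOn (fun α => -(Polynomial.eval α A / Polynomial.eval α B)) T := by
      intro a ha b hb hab
      by_contra hne
      refine hdist a b (Polynomial.mem_roots'.1 (Multiset.mem_toFinset.1 ha)).2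
        (Polynomial.mem_roots'.1 (Multiset.mem_toFinset.1 hb)).2 hne ?_
      have hab' : -(Polynomial.eval a A / Polynomial.eval a B) =
          -(Polynomial.eval b A / Polynomial.eval b B) := hab
      exact neg_injective hab'
    have hcards : gb.roots.toFinset.card = k := by
      rw [hTg, Finset.card_image_of_injOn hinj, hTcard]
    have hnodupg : gb.roots.Nodup :=
      Multiset.toFinset_card_eq_card_iff_nodup.1 (by rw [hcards, hgbroots])
    have hsplit : gb = Polynomial.C gb.leadingCoeff *
        (gb.roots.map fun a => Polynomial.X - Polynomial.C a).prod :=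
      (IsAlgClosed.splits gb).eq_prod_roots
    have hsepg : gb.Separable := by
      set s : Finset _ := ⟨gb.roots, hnodupg⟩ with hs
      have hprod : (gb.roots.map fun a => Polynomial.X - Polynomial.C a).prod =
          ∏ a ∈ s, (Polynomial.X - Polynomial.C a) := rfl
      have hsepprod : (∏ a ∈ s, (Polynomial.X - Polynomial.C a)).Separable := by
        have h := (separable_prod_X_sub_C_iff' (f := fun a => a) (s := s))
        exact h.2 (fun x _ y _ hxy => hxy)
      have hlcu : IsUnit gb.leadingCoeff :=
        isUnit_iff_ne_zero.2 (leadingCoeff_ne_zero.2 hgb0)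
      rw [hsplit, hprod]
      exact ((separable_C _).2 hlcu).mul hsepprod
        (isCoprime_of_isUnit_left' (isUnit_C.2 hlcu))
    refine resultantAux_ne_zero_of_isCoprime ?_ hgb0 ?_ hsepg
    · rw [hgbdeg, hgdeg]
    · exact (natDegree_derivative_le gb).trans (by rw [hgbdeg, hgdeg])
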